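/- arXiv:1504.02811 — 4 statements merged into one kernel-verified Lean document; each statement's English description precedes it below -/
import Mathlib

section
/- (Nonlinear Cauchy interlacing, positive type.) Assume the interval J = (a,b) is of positive type, T is continuously differentiable on (a,b), and let λ_i ∈ (a,b) denote the i-th eigenvalue of T(·) given by the variational principle (the minimum over i-dimensional subspaces of the maximum of ρ). Let 1 ≤ m ≤ n and let U be an n×m complex matrix with linearly independent columns, so that U*T(ν)U is an m×m Hermitian matrix for each ν ∈ [a,b]. Then for each j ∈ {1,…,m} there exists ν_j ∈ (a,b) such that zero is the j-th largest eigenvalue (counted with multiplicity) of U*T(ν_j)U, ν_j equals the minimum over all j-dimensional ℂ-subspaces W ⊆ ℂ^m of the maximum of ρ(Uy) over nonzero y ∈ W, and the interlacing inequalities λ_j ≤ ν_j ≤ λ_{n−m+j} hold. -/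
open Matrix Set
open scoped ComplexOrder

/-- `0` is the `j`-th largest eigenvalue (counted with multiplicity, `j` zero-based)
of the matrix `A`: the eigenvalues of `A` can be listed in decreasing order with
multiplicity (as the roots of the characteristic polynomial) so that the `j`-th
entry is `0`. -/
def ZeroIsKthLargestEigenvalue {m : ℕ} (A : Matrix (Fin m) (Fin m) ℂ) (k : Fin m) : Prop :=
  ∃ μ : Fin m → ℝ, Antitone μ ∧
    A.charpoly = ∏ i : Fin m, (Polynomial.X - Polynomial.C ((μ i : ℂ))) ∧ μ k = 0

section NCIPHelpers
open Polynomial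

lemma NCIP_charpoly_conj {m : ℕ} (V D W : Matrix (Fin m) (Fin m) ℂ)
    (h1 : V * W = 1) (h2 : W * V = 1) :
    (V * D * W).charpoly = D.charpoly := by
  have hone : (1 : Matrix (Fin m) (Fin m) ℂ).map C = 1 := Matrix.map_one _ (by simp) (by simp)
  have key : charmatrix (V * D * W) = V.map C * charmatrix D * W.map C := by
    rw [charmatrix, charmatrix, Matrix.mul_sub, Matrix.sub_mul]
    congr 1
    · have hc : V.map C * Matrix.scalar (Fin m) X = Matrix.scalar (Fin m) X * V.map C :=
        (Matrix.scalar_commute X (fun r => Commute.all _ _) _).symm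
      rw [hc, mul_assoc, ← Matrix.map_mul, h1, hone, mul_one]
    · rw [RingHom.mapMatrix_apply, RingHom.mapMatrix_apply, ← Matrix.map_mul, ← Matrix.map_mul]
  rw [Matrix.charpoly, key, det_mul, det_mul, mul_comm, ← mul_assoc, ← det_mul, ← Matrix.map_mul,
    h2, hone, det_one, one_mul, Matrix.charpoly]

lemma NCIP_charpoly_diag {m : ℕ} (d : Fin m → ℂ) :
    (Matrix.diagonal d).charpoly = ∏ i, (X - C (d i)) := by
  rw [charpoly_of_upperTriangular _ (Matrix.blockTriangular_diagonal d)]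
  simp

/-- Spectral package for a Hermitian matrix in concrete matrix language. -/
lemma NCIP_herm_package {m : ℕ} (A : Matrix (Fin m) (Fin m) ℂ) (hA : A.IsHermitian) :
    ∃ (g : Fin m → ℝ) (v : Fin m → (Fin m → ℂ)),
      (∀ i, A *ᵥ v i = (g i : ℂ) • v i) ∧
      (∀ i k, star (v i) ⬝ᵥ v k = if i = k then 1 else 0) ∧
      A.charpoly = ∏ i, (X - C ((g i : ℂ))) := by
  refine ⟨hA.eigenvalues, fun i => ⇑(hA.eigenvectorBasis i), ?_, ?_, ?_⟩
  · intro i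
    rw [hA.mulVec_eigenvectorBasis]
    ext k
    simp [Complex.real_smul]
  · intro i k
    have h := orthonormal_iff_ite.mp hA.eigenvectorBasis.orthonormal i k
    rw [← h, EuclideanSpace.inner_eq_star_dotProduct]; exact dotProduct_comm _ _
  · have hV1 : (hA.eigenvectorUnitary : Matrix (Fin m) (Fin m) ℂ) *
        star (hA.eigenvectorUnitary : Matrix (Fin m) (Fin m) ℂ) = 1 :=
      Matrix.mem_unitaryGroup_iff.mp hA.eigenvectorUnitary.2
    have hV2 : star (hA.eigenvectorUnitary : Matrix (Fin m) (Fin m) ℂ) *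
        (hA.eigenvectorUnitary : Matrix (Fin m) (Fin m) ℂ) = 1 :=
      Matrix.mem_unitaryGroup_iff'.mp hA.eigenvectorUnitary.2
    calc A.charpoly = ((hA.eigenvectorUnitary : Matrix (Fin m) (Fin m) ℂ) *
          Matrix.diagonal (RCLike.ofReal ∘ hA.eigenvalues) *
          star (hA.eigenvectorUnitary : Matrix (Fin m) (Fin m) ℂ)).charpoly := by
            conv_lhs => rw [hA.spectral_theorem, Unitary.conjStarAlgAut_apply]
      _ = (Matrix.diagonal (RCLike.ofReal ∘ hA.eigenvalues)).charpoly :=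
            NCIP_charpoly_conj _ _ _ hV1 hV2
      _ = ∏ i, (X - C ((hA.eigenvalues i : ℂ))) := by rw [NCIP_charpoly_diag]; rfl

lemma NCIP_sum_dotProduct {m k : ℕ} (u : Fin k → (Fin m → ℂ)) (w : Fin m → ℂ) :
    (∑ i, u i) ⬝ᵥ w = ∑ i, u i ⬝ᵥ w := by
  simp only [dotProduct, Finset.sum_apply, Finset.sum_mul]
  rw [Finset.sum_comm]

lemma NCIP_dotProduct_sum {m k : ℕ} (w : Fin m → ℂ) (u : Fin k → (Fin m → ℂ)) :
    w ⬝ᵥ (∑ i, u i) = ∑ i, w ⬝ᵥ u i := by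
  simp only [dotProduct, Finset.sum_apply, Finset.mul_sum]
  rw [Finset.sum_comm]

lemma NCIP_ortho_li {m : ℕ} (v : Fin m → (Fin m → ℂ))
    (horth : ∀ i k, star (v i) ⬝ᵥ v k = if i = k then 1 else 0) :
    LinearIndependent ℂ v := by
  rw [Fintype.linearIndependent_iff]
  intro c hc k
  have h := congrArg (fun z => star (v k) ⬝ᵥ z) hc
  simp only [dotProduct_zero] at h
  rw [NCIP_dotProduct_sum] at h
  simpa [dotProduct_smul, horth, Finset.sum_ite_eq] using h

lemma NCIP_form_of_coords {m : ℕ} (A : Matrix (Fin m) (Fin m) ℂ) (g : Fin m → ℝ)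
    (v : Fin m → (Fin m → ℂ))
    (hv : ∀ i, A *ᵥ v i = (g i : ℂ) • v i)
    (horth : ∀ i k, star (v i) ⬝ᵥ v k = if i = k then 1 else 0)
    (c : Fin m → ℂ) :
    star (∑ i, c i • v i) ⬝ᵥ A *ᵥ (∑ i, c i • v i)
      = ((∑ i, g i * Complex.normSq (c i) : ℝ) : ℂ) := by
  have h1 : A *ᵥ (∑ i, c i • v i) = ∑ i, (c i * (g i : ℂ)) • v i := by
    have e0 : A *ᵥ (∑ i, c i • v i) = A.mulVecLin (∑ i, c i • v i) := rfl
    rw [e0, map_sum]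
    refine Finset.sum_congr rfl fun i _ => ?_
    rw [LinearMap.map_smul, Matrix.mulVecLin_apply, hv, smul_smul]
  have h2 : star (∑ i, c i • v i) = ∑ i, (star (c i)) • star (v i) := by
    rw [star_sum]
    exact Finset.sum_congr rfl fun i _ => star_smul _ _
  rw [h1, h2, NCIP_sum_dotProduct]
  have h3 : ∀ i : Fin m, (star (c i) • star (v i)) ⬝ᵥ (∑ k, (c k * (g k : ℂ)) • v k)
      = ((g i * Complex.normSq (c i) : ℝ) : ℂ) := by
    intro i
    rw [NCIP_dotProduct_sum]
    have h4 : ∀ k : Fin m, (star (c i) • star (v i)) ⬝ᵥ ((c k * (g k : ℂ)) • v k)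
        = if i = k then star (c i) * (c i * (g i : ℂ)) else 0 := by
      intro k
      rw [smul_dotProduct, dotProduct_smul, horth]
      by_cases h : i = k
      · subst h; simp [smul_eq_mul]
      · simp [h]
    rw [Finset.sum_congr rfl fun k _ => h4 k, Finset.sum_ite_eq Finset.univ i
      (fun k => star (c i) * (c i * (g i : ℂ)))]
    simp only [Finset.mem_univ, if_true]
    have : star (c i) * c i = (Complex.normSq (c i) : ℂ) := by
      rw [Complex.star_def, mul_comm, Complex.mul_conj]
    push_cast
    rw [← mul_assoc, this]
    ring
  rw [Finset.sum_congr rfl fun i _ => h3 i]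
  push_cast
  ring

/-- Any element of the span of `v` over a finset `s` has coordinates supported on `s`. -/
lemma NCIP_mem_span_coords {m : ℕ} (v : Fin m → (Fin m → ℂ)) (s : Finset (Fin m))
    (x : Fin m → ℂ)
    (hx : x ∈ Submodule.span ℂ (Set.range (fun i : {i // i ∈ s} => v i))) :
    ∃ c : Fin m → ℂ, (∀ i ∉ s, c i = 0) ∧ x = ∑ i, c i • v i := by
  classical
  obtain ⟨c₀, hc₀⟩ := (Submodule.mem_span_range_iff_exists_fun ℂ).mp hx
  set c : Fin m → ℂ := fun i => if h : i ∈ s then c₀ ⟨i, h⟩ else 0 with hc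
  refine ⟨c, fun i hi => by simp [hc, hi], ?_⟩
  have h1 : ∑ i : Fin m, c i • v i = ∑ i ∈ s, c i • v i := by
    symm
    apply Finset.sum_subset (Finset.subset_univ s)
    intro i _ hi
    simp [hc, hi]
  have h2 : ∑ i ∈ s, c i • v i = ∑ i : {i // i ∈ s}, c₀ i • v i := by
    rw [← Finset.sum_coe_sort s (fun i => c i • v i)]
    exact Finset.sum_congr rfl fun i _ => by simp [hc, i.2]
  rw [h1, h2, hc₀]

lemma NCIP_finrank_span {m : ℕ} (v : Fin m → (Fin m → ℂ))
    (horth : ∀ i k, star (v i) ⬝ᵥ v k = if i = k then 1 else 0) (s : Finset (Fin m)) :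
    Module.finrank ℂ (Submodule.span ℂ (Set.range (fun i : {i // i ∈ s} => v i))) = s.card := by
  have hli : LinearIndependent ℂ (fun i : {i // i ∈ s} => v i) :=
    (NCIP_ortho_li v horth).comp Subtype.val Subtype.val_injective
  rw [finrank_span_eq_card hli, Fintype.card_coe]

lemma NCIP_exists_sub_of_finrank {m : ℕ} (W : Submodule ℂ (Fin m → ℂ)) (d : ℕ)
    (hd : d ≤ Module.finrank ℂ W) :
    ∃ W' : Submodule ℂ (Fin m → ℂ), W' ≤ W ∧ Module.finrank ℂ W' = d := by
  let B := Module.finBasis ℂ W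
  let f : Fin d → (Fin m → ℂ) := fun i => (B (Fin.castLE hd i) : Fin m → ℂ)
  have hli : LinearIndependent ℂ f := by
    have h1 : LinearIndependent ℂ (fun i : Fin d => B (Fin.castLE hd i)) :=
      B.linearIndependent.comp _ (Fin.castLE_injective hd)
    exact h1.map' W.subtype W.ker_subtype
  refine ⟨Submodule.span ℂ (Set.range f), ?_, ?_⟩
  · rw [Submodule.span_le]
    rintro x ⟨i, rfl⟩
    exact (B (Fin.castLE hd i)).2
  · rw [finrank_span_eq_card hli, Fintype.card_fin]

lemma NCIP_card_filter_perm {m : ℕ} (e : Equiv.Perm (Fin m)) (p : Fin m → Prop)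
    [DecidablePred p] :
    (Finset.univ.filter fun i => p (e i)).card = (Finset.univ.filter p).card := by
  apply Finset.card_nbij' (fun i => e i) (fun i => e.symm i)
  · intro i hi
    simpa using (Finset.mem_filter.mp hi).2
  · intro i hi
    simp only [Finset.mem_filter, Finset.mem_univ, true_and]
    simpa using (Finset.mem_filter.mp hi).2
  · intro i _; simp
  · intro i _; simp

lemma NCIP_exists_nonzero {m : ℕ} (W : Submodule ℂ (Fin m → ℂ))
    (hW : 0 < Module.finrank ℂ W) : ∃ y ∈ W, y ≠ 0 := by
  by_contra h
  push_neg at h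
  have : W = ⊥ := by
    rw [Submodule.eq_bot_iff]
    exact fun x hx => h x hx
  rw [this, finrank_bot] at hW
  exact lt_irrefl 0 hW

/-- Existence of max and min of a continuous scale-invariant functional on a nonzero subspace. -/
lemma NCIP_exists_extrema {m : ℕ} (σ : (Fin m → ℂ) → ℝ)
    (hcont : ContinuousOn σ {y : Fin m → ℂ | y ≠ 0})
    (hscale : ∀ (c : ℂ), c ≠ 0 → ∀ y : Fin m → ℂ, y ≠ 0 → σ (c • y) = σ y)
    (W : Submodule ℂ (Fin m → ℂ)) (hW : ∃ y ∈ W, y ≠ 0) :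
    (∃ y₀, (y₀ ∈ W ∧ y₀ ≠ 0) ∧ IsGreatest (σ '' {y | y ∈ W ∧ y ≠ 0}) (σ y₀)) ∧
    (∃ y₁, (y₁ ∈ W ∧ y₁ ≠ 0) ∧ IsLeast (σ '' {y | y ∈ W ∧ y ≠ 0}) (σ y₁)) := by
  obtain ⟨y, hyW, hy0⟩ := hW
  set K : Set (Fin m → ℂ) := (W : Set (Fin m → ℂ)) ∩ Metric.sphere 0 1 with hK
  have hKsub : ∀ z ∈ K, z ∈ W ∧ z ≠ 0 := by
    rintro z ⟨hzW, hzS⟩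
    refine ⟨hzW, ?_⟩
    have : ‖z‖ = 1 := by simpa using hzS
    intro h
    rw [h] at this
    simp at this
  have hnorm : ∀ z : Fin m → ℂ, z ∈ W → z ≠ 0 → ∃ z' ∈ K, σ z' = σ z := by
    intro z hzW hz0
    have hz : ‖z‖ ≠ 0 := norm_ne_zero_iff.mpr hz0
    refine ⟨((‖z‖⁻¹ : ℝ) : ℂ) • z, ⟨W.smul_mem _ hzW, ?_⟩, ?_⟩
    · simp only [Metric.mem_sphere, dist_zero_right, norm_smul]
      simp [norm_inv, hz, inv_mul_cancel₀]
    · exact hscale _ (by simpa using hz) z hz0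
  have hKc : IsCompact K := by
    have hWc : IsClosed (W : Set (Fin m → ℂ)) := Submodule.closed_of_finiteDimensional W
    exact IsCompact.of_isClosed_subset (isCompact_sphere 0 1)
      (hWc.inter Metric.isClosed_sphere) Set.inter_subset_right
  have hKne : K.Nonempty := by
    obtain ⟨z', hz', _⟩ := hnorm y hyW hy0
    exact ⟨z', hz'⟩
  have hKcont : ContinuousOn σ K := hcont.mono (fun z hz => (hKsub z hz).2)
  obtain ⟨y₀, hy₀K, hmax⟩ := hKc.exists_isMaxOn hKne hKcont
  obtain ⟨y₁, hy₁K, hmin⟩ := hKc.exists_isMinOn hKne hKcont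
  constructor
  · refine ⟨y₀, hKsub _ hy₀K, ⟨⟨y₀, hKsub _ hy₀K, rfl⟩, ?_⟩⟩
    rintro r ⟨z, ⟨hzW, hz0⟩, rfl⟩
    obtain ⟨z', hz'K, hz'⟩ := hnorm z hzW hz0
    rw [← hz']
    exact hmax hz'K
  · refine ⟨y₁, hKsub _ hy₁K, ⟨⟨y₁, hKsub _ hy₁K, rfl⟩, ?_⟩⟩
    rintro r ⟨z, ⟨hzW, hz0⟩, rfl⟩
    obtain ⟨z', hz'K, hz'⟩ := hnorm z hzW hz0
    rw [← hz']
    exact hmin hz'K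

end NCIPHelpers

/-- nonlinear Cauchy interlacing theorem, positive type.  If `(a,b)` is
of positive type, `T` is continuously differentiable on `(a,b)`, `lam i` is the
`i`-th eigenvalue given by the variational principle (zero-based), and `U` is an
`n×m` matrix with linearly independent columns, then for each `j` (zero-based) the
projected problem `Uᴴ T(ν) U` has a `j`-th eigenvalue `ν j ∈ (a,b)` given by the
min-max principle for `y ↦ ρ(U y)`, and `lam j ≤ ν j ≤ lam (n-m+j)`. -/
theorem nonlinear_cauchy_interlacing_positive_type
    (n m : ℕ) (hn : 1 ≤ n) (hm : 1 ≤ m) (hmn : m ≤ n)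
    (a b : ℝ) (hab : a < b)
    (T T' : ℝ → Matrix (Fin n) (Fin n) ℂ)
    (hTcont : ContinuousOn T (Set.Icc a b))
    (hTherm : ∀ μ ∈ Set.Icc a b, (T μ).IsHermitian)
    (hT'deriv : ∀ μ ∈ Set.Ioo a b, ∀ i j : Fin n,
      HasDerivAt (fun t : ℝ => T t i j) (T' μ i j) μ)
    (hT'cont : ContinuousOn T' (Set.Ioo a b))
    (ρ : (Fin n → ℂ) → ℝ)
    (hρcont : ContinuousOn ρ {x : Fin n → ℂ | x ≠ 0})
    (hρmem : ∀ x : Fin n → ℂ, x ≠ 0 → ρ x ∈ Set.Ioo a b)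
    (hρroot : ∀ x : Fin n → ℂ, x ≠ 0 → star x ⬝ᵥ (T (ρ x)) *ᵥ x = 0)
    (hρuniq : ∀ x : Fin n → ℂ, x ≠ 0 → ∀ μ ∈ Set.Ioo a b,
      star x ⬝ᵥ (T μ) *ᵥ x = 0 → μ = ρ x)
    (hpos : ∀ x : Fin n → ℂ, x ≠ 0 → ∀ μ ∈ Set.Ioo a b, μ ≠ ρ x →
      0 < (μ - ρ x) * (star x ⬝ᵥ (T μ) *ᵥ x).re)
    (lam : Fin n → ℝ)
    (hlam_mem : ∀ i : Fin n, lam i ∈ Set.Ioo a b)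
    (hlam : ∀ i : Fin n,
      IsLeast {r : ℝ | ∃ S : Submodule ℂ (Fin n → ℂ), Module.finrank ℂ S = (i : ℕ) + 1 ∧
        IsGreatest (ρ '' {x : Fin n → ℂ | x ∈ S ∧ x ≠ 0}) r} (lam i))
    (U : Matrix (Fin n) (Fin m) ℂ)
    (hU : LinearIndependent ℂ (fun j : Fin m => (fun i : Fin n => U i j))) :
    ∀ j : Fin m, ∃ ν ∈ Set.Ioo a b,
      ZeroIsKthLargestEigenvalue (Uᴴ * T ν * U) j ∧
      IsLeast {r : ℝ | ∃ W : Submodule ℂ (Fin m → ℂ), Module.finrank ℂ W = (j : ℕ) + 1 ∧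
        IsGreatest ((fun y => ρ (U *ᵥ y)) '' {y : Fin m → ℂ | y ∈ W ∧ y ≠ 0}) r} ν ∧
      lam ⟨(j : ℕ), lt_of_lt_of_le j.isLt hmn⟩ ≤ ν ∧
      ν ≤ lam ⟨n - m + (j : ℕ), by have := j.isLt; omega⟩ := by
  classical
  intro j
  set d : ℕ := (j : ℕ) + 1 with hd
  have hdm : d ≤ m := j.isLt
  -- injectivity facts about U
  have hUinj : ∀ y : Fin m → ℂ, U *ᵥ y = 0 → y = 0 := by
    intro y hy
    have hsum : ∑ k, y k • (fun i : Fin n => U i k) = 0 := by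
      funext i
      have := congrFun hy i
      simpa [Matrix.mulVec, dotProduct, mul_comm] using this
    have := Fintype.linearIndependent_iff.mp hU y hsum
    funext k; exact this k
  have hUne : ∀ y : Fin m → ℂ, y ≠ 0 → U *ᵥ y ≠ 0 := by
    intro y hy h; exact hy (hUinj y h)
  -- scale invariance of ρ
  have hρscale : ∀ (c : ℂ), c ≠ 0 → ∀ x : Fin n → ℂ, x ≠ 0 → ρ (c • x) = ρ x := by
    intro c hc x hx
    have hcx : c • x ≠ 0 := smul_ne_zero hc hx
    have hzero : star (c • x) ⬝ᵥ (T (ρ x)) *ᵥ (c • x) = 0 := by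
      rw [Matrix.mulVec_smul, star_smul, smul_dotProduct, dotProduct_smul,
        hρroot x hx]
      simp
    exact (hρuniq (c • x) hcx (ρ x) (hρmem x hx) hzero).symm
  -- σ
  set σ : (Fin m → ℂ) → ℝ := fun y => ρ (U *ᵥ y) with hσdef
  have hσscale : ∀ (c : ℂ), c ≠ 0 → ∀ y : Fin m → ℂ, y ≠ 0 → σ (c • y) = σ y := by
    intro c hc y hy
    show ρ (U *ᵥ (c • y)) = ρ (U *ᵥ y)
    rw [Matrix.mulVec_smul]
    exact hρscale c hc _ (hUne y hy)
  have hσcont : ContinuousOn σ {y : Fin m → ℂ | y ≠ 0} := by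
    have hUcont : Continuous (fun y : Fin m → ℂ => U *ᵥ y) := by
      have := (Matrix.mulVecLin U).continuous_of_finiteDimensional
      exact this
    exact hρcont.comp hUcont.continuousOn (fun y hy => hUne y hy)
  have hσmem : ∀ y : Fin m → ℂ, y ≠ 0 → σ y ∈ Set.Ioo a b := fun y hy => hρmem _ (hUne y hy)
  -- trichotomy for the quadratic form of T
  have tr_gt : ∀ x : Fin n → ℂ, x ≠ 0 → ∀ μ ∈ Set.Ioo a b, ρ x < μ →
      0 < (star x ⬝ᵥ (T μ) *ᵥ x).re := by
    intro x hx μ hμ hlt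
    have h := hpos x hx μ hμ (ne_of_lt hlt).symm
    rcases mul_pos_iff.mp h with ⟨_, h2⟩ | ⟨h1, _⟩
    · exact h2
    · linarith
  have tr_lt : ∀ x : Fin n → ℂ, x ≠ 0 → ∀ μ ∈ Set.Ioo a b, μ < ρ x →
      (star x ⬝ᵥ (T μ) *ᵥ x).re < 0 := by
    intro x hx μ hμ hlt
    have h := hpos x hx μ hμ (ne_of_lt hlt)
    rcases mul_pos_iff.mp h with ⟨h1, _⟩ | ⟨_, h2⟩
    · linarith
    · exact h2
  have tr_of_nonneg : ∀ x : Fin n → ℂ, x ≠ 0 → ∀ μ ∈ Set.Ioo a b,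
      0 ≤ (star x ⬝ᵥ (T μ) *ᵥ x).re → ρ x ≤ μ := by
    intro x hx μ hμ hge
    by_contra hcon
    push_neg at hcon
    exact absurd hge (not_le.mpr (tr_lt x hx μ hμ hcon))
  have tr_of_pos : ∀ x : Fin n → ℂ, x ≠ 0 → ∀ μ ∈ Set.Ioo a b,
      0 < (star x ⬝ᵥ (T μ) *ᵥ x).re → ρ x < μ := by
    intro x hx μ hμ hgt
    rcases lt_trichotomy (ρ x) μ with h | h | h
    · exact h
    · subst h
      have := hρroot x hx
      rw [this] at hgt
      simp at hgt
    · exact absurd hgt (not_lt.mpr (le_of_lt (tr_lt x hx μ hμ h)))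
  have tr_of_neg : ∀ x : Fin n → ℂ, x ≠ 0 → ∀ μ ∈ Set.Ioo a b,
      (star x ⬝ᵥ (T μ) *ᵥ x).re < 0 → μ < ρ x := by
    intro x hx μ hμ hlt
    rcases lt_trichotomy μ (ρ x) with h | h | h
    · exact h
    · subst h
      have := hρroot x hx
      rw [this] at hlt
      simp at hlt
    · exact absurd hlt (not_lt.mpr (le_of_lt (tr_gt x hx μ hμ h)))
  -- the candidate set R
  set R : Set ℝ := {r : ℝ | ∃ W : Submodule ℂ (Fin m → ℂ), Module.finrank ℂ W = d ∧
      IsGreatest (σ '' {y : Fin m → ℂ | y ∈ W ∧ y ≠ 0}) r} with hRdef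
  -- R is nonempty
  have hfinrank_top : Module.finrank ℂ (⊤ : Submodule ℂ (Fin m → ℂ)) = m := by
    rw [finrank_top, Module.finrank_fin_fun]
  have hRne : R.Nonempty := by
    obtain ⟨W, _, hWr⟩ := NCIP_exists_sub_of_finrank (⊤ : Submodule ℂ (Fin m → ℂ)) d
      (by rw [hfinrank_top]; exact hdm)
    obtain ⟨y, hyW, hy0⟩ := NCIP_exists_nonzero W (by rw [hWr]; omega)
    obtain ⟨⟨y₀, hy₀, hmax⟩, -⟩ := NCIP_exists_extrema σ hσcont hσscale W ⟨y, hyW, hy0⟩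
    exact ⟨σ y₀, W, hWr, hmax⟩
  -- every element of R is a σ-value, hence in (a,b); and a uniform lower bound in (a,b)
  have hRval : ∀ r ∈ R, ∃ y : Fin m → ℂ, y ≠ 0 ∧ σ y = r := by
    rintro r ⟨W, -, ⟨⟨y, ⟨-, hy0⟩, hyr⟩, -⟩⟩
    exact ⟨y, hy0, hyr⟩
  obtain ⟨-, ⟨y₁, ⟨-, hy₁0⟩, ⟨-, hglb⟩⟩⟩ := NCIP_exists_extrema σ hσcont hσscale
      (⊤ : Submodule ℂ (Fin m → ℂ))
      (NCIP_exists_nonzero ⊤ (by rw [hfinrank_top]; omega))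
  have hRlb : ∀ r ∈ R, σ y₁ ≤ r := by
    intro r hr
    obtain ⟨y, hy0, rfl⟩ := hRval r hr
    exact hglb ⟨y, ⟨Submodule.mem_top, hy0⟩, rfl⟩
  have hbdd : BddBelow R := ⟨σ y₁, hRlb⟩
  set ν : ℝ := sInf R with hνdef
  have hν_lb : ∀ r ∈ R, ν ≤ r := fun r hr => csInf_le hbdd hr
  have hνIoo : ν ∈ Set.Ioo a b := by
    obtain ⟨r₀, hr₀⟩ := id hRne
    have h1 : σ y₁ ≤ ν := le_csInf hRne hRlb
    have h2 : ν ≤ r₀ := hν_lb r₀ hr₀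
    obtain ⟨y, hy0, rfl⟩ := hRval r₀ hr₀
    exact ⟨lt_of_lt_of_le (hσmem y₁ hy₁0).1 h1, lt_of_le_of_lt h2 (hσmem y hy0).2⟩
  -- spectral data for the projected matrix at ν
  have hνIcc : ν ∈ Set.Icc a b := ⟨le_of_lt hνIoo.1, le_of_lt hνIoo.2⟩
  have hA : (Uᴴ * T ν * U).IsHermitian :=
    Matrix.isHermitian_conjTranspose_mul_mul U (hTherm ν hνIcc)
  obtain ⟨g, v, hv, horth, hchar⟩ := NCIP_herm_package (Uᴴ * T ν * U) hA
  -- the quadratic form of the projected matrix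
  have hform : ∀ y : Fin m → ℂ,
      star y ⬝ᵥ (Uᴴ * T ν * U) *ᵥ y = star (U *ᵥ y) ⬝ᵥ (T ν) *ᵥ (U *ᵥ y) := by
    intro y
    rw [← Matrix.mulVec_mulVec, ← Matrix.mulVec_mulVec, Matrix.dotProduct_mulVec,
      ← Matrix.star_mulVec]
  -- the span of the eigenvectors indexed by a finset
  have span_coords : ∀ (s : Finset (Fin m)) (x : Fin m → ℂ),
      x ∈ Submodule.span ℂ (Set.range (fun i : {i // i ∈ s} => v i)) → x ≠ 0 →
      ∃ c : Fin m → ℂ, (∀ i ∉ s, c i = 0) ∧ (∃ k ∈ s, c k ≠ 0) ∧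
        (star x ⬝ᵥ (Uᴴ * T ν * U) *ᵥ x).re = ∑ i, g i * Complex.normSq (c i) := by
    intro s x hx hx0
    obtain ⟨c, hsupp, hxe⟩ := NCIP_mem_span_coords v s x hx
    have hval : star x ⬝ᵥ (Uᴴ * T ν * U) *ᵥ x = ((∑ i, g i * Complex.normSq (c i) : ℝ) : ℂ) := by
      rw [hxe]; exact NCIP_form_of_coords _ g v hv horth c
    refine ⟨c, hsupp, ?_, by rw [hval, Complex.ofReal_re]⟩
    by_contra hcon
    push_neg at hcon
    apply hx0
    rw [hxe]
    apply Finset.sum_eq_zero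
    intro i _
    by_cases h : i ∈ s
    · rw [hcon i h, zero_smul]
    · rw [hsupp i h, zero_smul]
  -- sign lemmas
  have sign_nonneg : ∀ s : Finset (Fin m), (∀ i ∈ s, 0 ≤ g i) →
      ∀ x ∈ Submodule.span ℂ (Set.range (fun i : {i // i ∈ s} => v i)), x ≠ 0 → σ x ≤ ν := by
    intro s hs x hx hx0
    obtain ⟨c, hsupp, -, hval⟩ := span_coords s x hx hx0
    have hge : 0 ≤ (star x ⬝ᵥ (Uᴴ * T ν * U) *ᵥ x).re := by
      rw [hval]
      apply Finset.sum_nonneg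
      intro i _
      by_cases h : i ∈ s
      · exact mul_nonneg (hs i h) (Complex.normSq_nonneg _)
      · rw [hsupp i h]; simp
    rw [hform x] at hge
    exact tr_of_nonneg _ (hUne x hx0) ν hνIoo hge
  have sign_neg : ∀ s : Finset (Fin m), (∀ i ∈ s, g i < 0) →
      ∀ x ∈ Submodule.span ℂ (Set.range (fun i : {i // i ∈ s} => v i)), x ≠ 0 → ν < σ x := by
    intro s hs x hx hx0
    obtain ⟨c, hsupp, ⟨k, hks, hck⟩, hval⟩ := span_coords s x hx hx0
    have hlt : (star x ⬝ᵥ (Uᴴ * T ν * U) *ᵥ x).re < 0 := by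
      rw [hval]
      have : ∑ i, g i * Complex.normSq (c i) < ∑ _i : Fin m, (0 : ℝ) := by
        apply Finset.sum_lt_sum
        · intro i _
          by_cases h : i ∈ s
          · exact mul_nonpos_of_nonpos_of_nonneg (le_of_lt (hs i h)) (Complex.normSq_nonneg _)
          · rw [hsupp i h]; simp
        · exact ⟨k, Finset.mem_univ k, mul_neg_of_neg_of_pos (hs k hks)
            (Complex.normSq_pos.mpr hck)⟩
      simpa using this
    rw [hform x] at hlt
    exact tr_of_neg _ (hUne x hx0) ν hνIoo hlt
  have sign_pos : ∀ s : Finset (Fin m), (∀ i ∈ s, 0 < g i) →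
      ∀ x ∈ Submodule.span ℂ (Set.range (fun i : {i // i ∈ s} => v i)), x ≠ 0 → σ x < ν := by
    intro s hs x hx hx0
    obtain ⟨c, hsupp, ⟨k, hks, hck⟩, hval⟩ := span_coords s x hx hx0
    have hgt : 0 < (star x ⬝ᵥ (Uᴴ * T ν * U) *ᵥ x).re := by
      rw [hval]
      have : ∑ _i : Fin m, (0 : ℝ) < ∑ i, g i * Complex.normSq (c i) := by
        apply Finset.sum_lt_sum
        · intro i _
          by_cases h : i ∈ s
          · exact mul_nonneg (le_of_lt (hs i h)) (Complex.normSq_nonneg _)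
          · rw [hsupp i h]; simp
        · exact ⟨k, Finset.mem_univ k, mul_pos (hs k hks) (Complex.normSq_pos.mpr hck)⟩
      simpa using this
    rw [hform x] at hgt
    exact tr_of_pos _ (hUne x hx0) ν hνIoo hgt
  -- intersection of subspaces with large dimensions
  have inter_ne : ∀ (W N : Submodule ℂ (Fin m → ℂ)),
      m < Module.finrank ℂ W + Module.finrank ℂ N → ∃ x, x ∈ W ∧ x ∈ N ∧ x ≠ 0 := by
    intro W N hWN
    have hsup : Module.finrank ℂ (W ⊔ N : Submodule ℂ (Fin m → ℂ)) ≤ m := by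
      have := Submodule.finrank_le (W ⊔ N : Submodule ℂ (Fin m → ℂ))
      rwa [Module.finrank_fin_fun] at this
    have heq := Submodule.finrank_sup_add_finrank_inf_eq W N
    have hpos : 0 < Module.finrank ℂ (W ⊓ N : Submodule ℂ (Fin m → ℂ)) := by omega
    obtain ⟨x, hx, hx0⟩ := NCIP_exists_nonzero _ hpos
    exact ⟨x, (Submodule.mem_inf.mp hx).1, (Submodule.mem_inf.mp hx).2, hx0⟩
  -- the number of negative eigenvalues is at most m - d
  have hneg_card : (Finset.univ.filter fun i => g i < 0).card ≤ m - d := by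
    by_contra hcon
    push_neg at hcon
    set s : Finset (Fin m) := Finset.univ.filter fun i => g i < 0 with hsdef
    set N : Submodule ℂ (Fin m → ℂ) :=
      Submodule.span ℂ (Set.range (fun i : {i // i ∈ s} => v i)) with hNdef
    have hNrank : Module.finrank ℂ N = s.card := NCIP_finrank_span v horth s
    have hNne : ∃ y ∈ N, y ≠ 0 := NCIP_exists_nonzero N (by rw [hNrank]; omega)
    obtain ⟨-, ⟨z₁, ⟨hz₁N, hz₁0⟩, ⟨-, hNlb⟩⟩⟩ := NCIP_exists_extrema σ hσcont hσscale N hNne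
    have hc : ν < σ z₁ := sign_neg s (fun i hi => (Finset.mem_filter.mp hi).2) z₁ hz₁N hz₁0
    -- get an element of R strictly below σ z₁
    have : ∃ r ∈ R, r < σ z₁ := by
      by_contra hcon2
      push_neg at hcon2
      have : σ z₁ ≤ ν := le_csInf hRne hcon2
      linarith
    obtain ⟨r, hrR, hrlt⟩ := this
    obtain ⟨W, hWrank, ⟨-, hWub⟩⟩ := hrR
    obtain ⟨x, hxW, hxN, hx0⟩ := inter_ne W N (by rw [hWrank, hNrank]; omega)
    have h1 : σ x ≤ r := hWub ⟨x, ⟨hxW, hx0⟩, rfl⟩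
    have h2 : σ z₁ ≤ σ x := hNlb ⟨x, ⟨hxN, hx0⟩, rfl⟩
    linarith
  -- construct the witness subspace W₀ on which the greatest value is ν
  have hnonneg_card : d ≤ (Finset.univ.filter fun i => 0 ≤ g i).card := by
    have hsplit := Finset.card_filter_add_card_filter_not
      (s := (Finset.univ : Finset (Fin m))) (p := fun i => 0 ≤ g i)
    simp only [not_le, Finset.card_univ, Fintype.card_fin] at hsplit
    omega
  obtain ⟨s₀, hs₀sub, hs₀card⟩ := Finset.exists_subset_card_eq hnonneg_card
  set W₀ : Submodule ℂ (Fin m → ℂ) :=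
    Submodule.span ℂ (Set.range (fun i : {i // i ∈ s₀} => v i)) with hW₀def
  have hW₀rank : Module.finrank ℂ W₀ = d := by rw [NCIP_finrank_span v horth s₀, hs₀card]
  have hW₀sign : ∀ x ∈ W₀, x ≠ 0 → σ x ≤ ν := by
    intro x hx hx0
    exact sign_nonneg s₀ (fun i hi => (Finset.mem_filter.mp (hs₀sub hi)).2) x hx hx0
  have hW₀ne : ∃ y ∈ W₀, y ≠ 0 := NCIP_exists_nonzero W₀ (by rw [hW₀rank]; omega)
  obtain ⟨⟨y₀, ⟨hy₀W, hy₀0⟩, hy₀gr⟩, -⟩ := NCIP_exists_extrema σ hσcont hσscale W₀ hW₀ne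
  have hy₀ν : σ y₀ = ν := by
    have h1 : σ y₀ ≤ ν := hW₀sign y₀ hy₀W hy₀0
    have h2 : ν ≤ σ y₀ := hν_lb _ ⟨W₀, hW₀rank, hy₀gr⟩
    linarith
  have hνgr : IsGreatest (σ '' {y : Fin m → ℂ | y ∈ W₀ ∧ y ≠ 0}) ν := hy₀ν ▸ hy₀gr
  have hνR : ν ∈ R := ⟨W₀, hW₀rank, hνgr⟩
  have hνLeast : IsLeast R ν := ⟨hνR, hν_lb⟩
  -- the number of positive eigenvalues is at most j
  have hpos_card : (Finset.univ.filter fun i => 0 < g i).card ≤ (j : ℕ) := by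
    by_contra hcon
    push_neg at hcon
    obtain ⟨s₁, hs₁sub, hs₁card⟩ := Finset.exists_subset_card_eq
      (show d ≤ (Finset.univ.filter fun i => 0 < g i).card from hcon)
    set P : Submodule ℂ (Fin m → ℂ) :=
      Submodule.span ℂ (Set.range (fun i : {i // i ∈ s₁} => v i)) with hPdef
    have hPrank : Module.finrank ℂ P = d := by rw [NCIP_finrank_span v horth s₁, hs₁card]
    have hPne : ∃ y ∈ P, y ≠ 0 := NCIP_exists_nonzero P (by rw [hPrank]; omega)
    obtain ⟨⟨z₀, ⟨hz₀P, hz₀0⟩, hz₀gr⟩, -⟩ := NCIP_exists_extrema σ hσcont hσscale P hPne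
    have h1 : σ z₀ < ν :=
      sign_pos s₁ (fun i hi => (Finset.mem_filter.mp (hs₁sub hi)).2) z₀ hz₀P hz₀0
    have h2 : ν ≤ σ z₀ := hν_lb _ ⟨P, hPrank, hz₀gr⟩
    linarith
  -- sorted eigenvalues
  set τ : Equiv.Perm (Fin m) := Tuple.sort (fun i => -g i) with hτdef
  set μ : Fin m → ℝ := fun i => g (τ i) with hμdef
  have hantiμ : Antitone μ := by
    intro i k hik
    have := Tuple.monotone_sort (fun i => -g i) hik
    simp only [Function.comp_apply] at this
    show g (τ k) ≤ g (τ i)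
    linarith [this]
  have hcharμ : (Uᴴ * T ν * U).charpoly
      = ∏ i : Fin m, (Polynomial.X - Polynomial.C ((μ i : ℂ))) := by
    rw [hchar]
    exact (Equiv.prod_comp τ (fun i => Polynomial.X - Polynomial.C ((g i : ℂ)))).symm
  have hμj : μ j = 0 := by
    have hposμ : (Finset.univ.filter fun i => 0 < μ i).card ≤ (j : ℕ) := by
      rw [show (Finset.univ.filter fun i => 0 < μ i)
          = (Finset.univ.filter fun i => 0 < g (τ i)) from rfl]
      rw [NCIP_card_filter_perm τ (fun i => 0 < g i)]
      exact hpos_card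
    have hnegμ : (Finset.univ.filter fun i => μ i < 0).card ≤ m - d := by
      rw [show (Finset.univ.filter fun i => μ i < 0)
          = (Finset.univ.filter fun i => g (τ i) < 0) from rfl]
      rw [NCIP_card_filter_perm τ (fun i => g i < 0)]
      exact hneg_card
    rcases lt_trichotomy (μ j) 0 with h | h | h
    · exfalso
      have hsub : Finset.Ici j ⊆ Finset.univ.filter fun i => μ i < 0 := by
        intro i hi
        rw [Finset.mem_filter]
        exact ⟨Finset.mem_univ i, lt_of_le_of_lt (hantiμ (Finset.mem_Ici.mp hi)) h⟩
      have hcard := Finset.card_le_card hsub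
      rw [Fin.card_Ici] at hcard
      have := j.isLt
      omega
    · exact h
    · exfalso
      have hsub : Finset.Iic j ⊆ Finset.univ.filter fun i => 0 < μ i := by
        intro i hi
        rw [Finset.mem_filter]
        exact ⟨Finset.mem_univ i, lt_of_lt_of_le h (hantiμ (Finset.mem_Iic.mp hi))⟩
      have hcard := Finset.card_le_card hsub
      rw [Fin.card_Iic] at hcard
      omega
  -- the linear map given by U
  set u : (Fin m → ℂ) →ₗ[ℂ] (Fin n → ℂ) := Matrix.mulVecLin U with hudef
  have hker : LinearMap.ker u = ⊥ := by
    rw [Submodule.eq_bot_iff]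
    intro y hy
    exact hUinj y (by simpa [hudef, Matrix.mulVecLin_apply] using hy)
  have hinj : Function.Injective u := LinearMap.ker_eq_bot.mp hker
  -- first interlacing inequality
  have hlower : lam ⟨(j : ℕ), lt_of_lt_of_le j.isLt hmn⟩ ≤ ν := by
    set S : Submodule ℂ (Fin n → ℂ) := Submodule.map u W₀ with hSdef
    have hSrank : Module.finrank ℂ S = d := by
      rw [← (Submodule.equivMapOfInjective u hinj W₀).finrank_eq]
      exact hW₀rank
    have hset : ρ '' {x : Fin n → ℂ | x ∈ S ∧ x ≠ 0} = σ '' {y : Fin m → ℂ | y ∈ W₀ ∧ y ≠ 0} := by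
      ext r
      constructor
      · rintro ⟨x, ⟨hxS, hx0⟩, rfl⟩
        obtain ⟨y, hyW, rfl⟩ := Submodule.mem_map.mp hxS
        refine ⟨y, ⟨hyW, ?_⟩, rfl⟩
        intro h
        apply hx0
        rw [h, map_zero]
      · rintro ⟨y, ⟨hyW, hy0⟩, rfl⟩
        exact ⟨U *ᵥ y, ⟨Submodule.mem_map.mpr ⟨y, hyW, rfl⟩, hUne y hy0⟩, rfl⟩
    apply (hlam ⟨(j : ℕ), lt_of_lt_of_le j.isLt hmn⟩).2
    refine ⟨S, ?_, ?_⟩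
    · rw [hSrank]
    · rw [hset]
      exact hνgr
  -- second interlacing inequality
  have hupper : ν ≤ lam ⟨n - m + (j : ℕ), by have := j.isLt; omega⟩ := by
    obtain ⟨S, hSrank, hSgr⟩ := (hlam ⟨n - m + (j : ℕ), by have := j.isLt; omega⟩).1
    set W : Submodule ℂ (Fin m → ℂ) := Submodule.comap u S with hWdef
    have hWrank : d ≤ Module.finrank ℂ W := by
      have h1 : Module.finrank ℂ W = Module.finrank ℂ (Submodule.map u W) :=
        (Submodule.equivMapOfInjective u hinj W).finrank_eq
      have h2 : Submodule.map u W = LinearMap.range u ⊓ S := Submodule.map_comap_eq u S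
      have h3 : Module.finrank ℂ (LinearMap.range u) = m := by
        have h4 := LinearMap.finrank_range_add_finrank_ker u
        rw [hker, finrank_bot, Module.finrank_fin_fun] at h4
        omega
      have h5 := Submodule.finrank_sup_add_finrank_inf_eq (LinearMap.range u) S
      have h6 : Module.finrank ℂ ((LinearMap.range u) ⊔ S : Submodule ℂ (Fin n → ℂ)) ≤ n := by
        have := Submodule.finrank_le ((LinearMap.range u) ⊔ S : Submodule ℂ (Fin n → ℂ))
        rwa [Module.finrank_fin_fun] at this
      have h7 : Module.finrank ℂ S = (n - m + (j : ℕ)) + 1 := hSrank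
      rw [h1, h2]
      have := j.isLt
      omega
    obtain ⟨W', hW'le, hW'rank⟩ := NCIP_exists_sub_of_finrank W d hWrank
    have hW'ne : ∃ y ∈ W', y ≠ 0 := NCIP_exists_nonzero W' (by rw [hW'rank]; omega)
    obtain ⟨⟨z₀, ⟨hz₀W, hz₀0⟩, hz₀gr⟩, -⟩ := NCIP_exists_extrema σ hσcont hσscale W' hW'ne
    have h1 : ν ≤ σ z₀ := hν_lb _ ⟨W', hW'rank, hz₀gr⟩
    have h2 : σ z₀ ≤ lam ⟨n - m + (j : ℕ), by have := j.isLt; omega⟩ := by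
      apply hSgr.2
      exact ⟨U *ᵥ z₀, ⟨Submodule.mem_comap.mp (hW'le hz₀W), hUne z₀ hz₀0⟩, rfl⟩
    linarith
  exact ⟨ν, hνIoo, ⟨μ, hantiμ, hcharμ, hμj⟩, hνLeast, hlower, hupper⟩
end

section
/- (Action of the stabilized preconditioner.) If y ∈ ℂ^n satisfies w*y = 0 (equivalently Π*y = y) and b := Π M Π* y, then y = M_Π† b; that is, y = (I − (M⁻¹w w*)/(w*M⁻¹w)) M⁻¹ b. -/
open Matrix

lemma vmv_mulVec {n : ℕ} (u v z : Fin n → ℂ) :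
    vecMulVec u v *ᵥ z = (v ⬝ᵥ z) • u := by
  ext i
  simp [vecMulVec, mulVec, dotProduct, Finset.mul_sum, mul_assoc, mul_comm, mul_left_comm]

/-- action of the stabilized preconditioner.  With
`Π = I − (w x*)/(x*w)` and `M_Π† = (I − (M⁻¹w w*)/(w*M⁻¹w)) M⁻¹`, if `w*y = 0`
and `b = Π M Π* y`, then `y = M_Π† b`. -/
theorem stabilized_preconditioner_action
    (n : ℕ) (M : Matrix (Fin n) (Fin n) ℂ) (hM : IsUnit M.det)
    (x w : Fin n → ℂ)
    (hxw : star x ⬝ᵥ w ≠ 0)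
    (hwMw : star w ⬝ᵥ M⁻¹ *ᵥ w ≠ 0)
    (P : Matrix (Fin n) (Fin n) ℂ)
    (hP : P = 1 - (star x ⬝ᵥ w)⁻¹ • vecMulVec w (star x))
    (MPd : Matrix (Fin n) (Fin n) ℂ)
    (hMPd : MPd = (1 - (star w ⬝ᵥ M⁻¹ *ᵥ w)⁻¹ • vecMulVec (M⁻¹ *ᵥ w) (star w)) * M⁻¹)
    (y bvec : Fin n → ℂ)
    (hy : star w ⬝ᵥ y = 0)
    (hb : bvec = (P * M * Pᴴ) *ᵥ y) :
    y = MPd *ᵥ bvec := by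
  subst hP hMPd hb
  have hPHy : (1 - (star x ⬝ᵥ w)⁻¹ • vecMulVec w (star x))ᴴ *ᵥ y = y := by
    have h1 : (vecMulVec w (star x))ᴴ = vecMulVec x (star w) := by
      ext i j; simp [vecMulVec, conjTranspose_apply, mul_comm]
    rw [conjTranspose_sub, conjTranspose_smul, conjTranspose_one, h1,
      sub_mulVec, one_mulVec, smul_mulVec, vmv_mulVec, hy]
    simp
  rw [← mulVec_mulVec, ← mulVec_mulVec, hPHy, ← mulVec_mulVec]
  set c := (star x ⬝ᵥ w)⁻¹ with hc
  set d := star w ⬝ᵥ M⁻¹ *ᵥ w with hd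
  set My := M *ᵥ y with hMy
  set α := c * (star x ⬝ᵥ My) with hα
  have step1 : (1 - c • vecMulVec w (star x)) *ᵥ My = My - α • w := by
    rw [sub_mulVec, one_mulVec, smul_mulVec, vmv_mulVec, smul_smul]
  rw [step1]
  have step2 : M⁻¹ *ᵥ (My - α • w) = y - α • (M⁻¹ *ᵥ w) := by
    rw [mulVec_sub, mulVec_smul, hMy, mulVec_mulVec, nonsing_inv_mul M hM, one_mulVec]
  rw [step2]
  rw [sub_mulVec, one_mulVec, smul_mulVec, vmv_mulVec]
  have hdot : star w ⬝ᵥ (y - α • (M⁻¹ *ᵥ w)) = -α * d := by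
    rw [dotProduct_sub, hy, dotProduct_smul, ← hd]
    ring_nf
  rw [hdot]
  have hdd : d⁻¹ * (-α * d) = -α := by field_simp
  rw [smul_smul, hdd]
  module
end

section
/- The stabilized preconditioner satisfies the identities M_Π† Π = M_Π† and Π* M_Π† = M_Π†. -/
open Matrix

lemma aux_vecMulVec_mul {n : ℕ} (u v : Fin n → ℂ) (A : Matrix (Fin n) (Fin n) ℂ) :
    vecMulVec u v * A = vecMulVec u (v ᵥ* A) := by
  ext i j
  simp [mul_apply, vecMulVec_apply, vecMul, dotProduct, Finset.mul_sum, mul_assoc]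

lemma aux_mul_vecMulVec {n : ℕ} (u v : Fin n → ℂ) (A : Matrix (Fin n) (Fin n) ℂ) :
    A * vecMulVec u v = vecMulVec (A *ᵥ u) v := by
  ext i j
  simp [mul_apply, vecMulVec_apply, mulVec, dotProduct, Finset.sum_mul, mul_assoc]

lemma aux_vecMulVec_vecMulVec {n : ℕ} (u v a b : Fin n → ℂ) :
    vecMulVec u v * vecMulVec a b = (v ⬝ᵥ a) • vecMulVec u b := by
  ext i j
  simp only [mul_apply, vecMulVec_apply, dotProduct, Matrix.smul_apply, smul_eq_mul,
    Finset.sum_mul]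
  exact Finset.sum_congr rfl fun k _ => by ring

lemma aux_vecMulVec_conjTranspose {n : ℕ} (u v : Fin n → ℂ) :
    (vecMulVec u v)ᴴ = vecMulVec (star v) (star u) := by
  ext i j
  simp [vecMulVec_apply, mul_comm]

/-- with `Π = I − (w x*)/(x*w)` and
`M_Π† = (I − (M⁻¹w w*)/(w*M⁻¹w)) M⁻¹`, the stabilized preconditioner satisfies
`M_Π† Π = M_Π†` and `Π* M_Π† = M_Π†`. -/
theorem stabilized_preconditioner_projector_identities
    (n : ℕ) (M : Matrix (Fin n) (Fin n) ℂ) (hM : IsUnit M.det)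
    (x w : Fin n → ℂ)
    (hxw : star x ⬝ᵥ w ≠ 0)
    (hwMw : star w ⬝ᵥ M⁻¹ *ᵥ w ≠ 0)
    (P : Matrix (Fin n) (Fin n) ℂ)
    (hP : P = 1 - (star x ⬝ᵥ w)⁻¹ • vecMulVec w (star x))
    (MPd : Matrix (Fin n) (Fin n) ℂ)
    (hMPd : MPd = (1 - (star w ⬝ᵥ M⁻¹ *ᵥ w)⁻¹ • vecMulVec (M⁻¹ *ᵥ w) (star w)) * M⁻¹) :
    MPd * P = MPd ∧ Pᴴ * MPd = MPd := by
  set c := star w ⬝ᵥ M⁻¹ *ᵥ w with hc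
  have hMPd' : MPd = M⁻¹ - c⁻¹ • (vecMulVec (M⁻¹ *ᵥ w) (star w ᵥ* M⁻¹)) := by
    rw [hMPd, sub_mul, one_mul, Matrix.smul_mul, aux_vecMulVec_mul]
  have hdot : (star w ᵥ* M⁻¹) ⬝ᵥ w = c := by
    rw [hc, ← dotProduct_mulVec]
  have key1 : MPd * vecMulVec w (star x) = 0 := by
    rw [hMPd', sub_mul, Matrix.smul_mul, aux_mul_vecMulVec,
      aux_vecMulVec_vecMulVec, hdot, smul_smul, inv_mul_cancel₀ hwMw, one_smul]
    exact sub_self _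
  have key2 : vecMulVec x (star w) * MPd = 0 := by
    rw [hMPd', Matrix.mul_sub, Matrix.mul_smul, aux_vecMulVec_mul,
      aux_vecMulVec_vecMulVec, ← hc, smul_smul,
      inv_mul_cancel₀ hwMw, one_smul, sub_self]
  constructor
  · rw [hP, Matrix.mul_sub, mul_one, Matrix.mul_smul, key1, smul_zero, sub_zero]
  · rw [hP]
    rw [conjTranspose_sub, conjTranspose_one, conjTranspose_smul,
      aux_vecMulVec_conjTranspose, star_star]
    rw [Matrix.sub_mul, one_mul, Matrix.smul_mul, key2, smul_zero, sub_zero]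
end

section
/- (Action of the block stabilized preconditioner.) If Y ∈ ℂ^{n×q} satisfies Z*Y = 0 (equivalently 𝚷*Y = Y) and B := 𝚷 M 𝚷* Y, then Y = (I − M⁻¹ Z (Z*M⁻¹Z)⁻¹ Z*) M⁻¹ B. -/
open Matrix

/-- action of the block stabilized preconditioner.  With
`𝚷 = I − Z (X*Z)⁻¹ X*`, if `Z*Y = 0` and `B = 𝚷 M 𝚷* Y`, then
`Y = (I − M⁻¹ Z (Z*M⁻¹Z)⁻¹ Z*) M⁻¹ B`. -/
theorem block_stabilized_preconditioner_action
    (n q : ℕ) (M : Matrix (Fin n) (Fin n) ℂ) (hM : IsUnit M.det)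
    (X Z : Matrix (Fin n) (Fin q) ℂ)
    (hXZ : IsUnit (Xᴴ * Z).det)
    (hZMZ : IsUnit (Zᴴ * M⁻¹ * Z).det)
    (P : Matrix (Fin n) (Fin n) ℂ)
    (hP : P = 1 - Z * (Xᴴ * Z)⁻¹ * Xᴴ)
    (Y Bm : Matrix (Fin n) (Fin q) ℂ)
    (hY : Zᴴ * Y = 0)
    (hB : Bm = P * M * Pᴴ * Y) :
    Y = (1 - M⁻¹ * Z * (Zᴴ * M⁻¹ * Z)⁻¹ * Zᴴ) * M⁻¹ * Bm := by
  subst hP hB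
  have hS' : IsUnit (Zᴴ * (M⁻¹ * Z)).det := by rwa [← Matrix.mul_assoc]
  have key : ∀ t : Matrix (Fin q) (Fin q) ℂ,
      (Zᴴ * (M⁻¹ * Z))⁻¹ * (Zᴴ * (M⁻¹ * (Z * t))) = t := by
    intro t
    rw [show Zᴴ * (M⁻¹ * (Z * t)) = Zᴴ * (M⁻¹ * Z) * t by
      simp [Matrix.mul_assoc]]
    exact Matrix.nonsing_inv_mul_cancel_left _ _ hS'
  simp only [conjTranspose_sub, conjTranspose_mul, conjTranspose_one,
    Matrix.mul_sub, Matrix.sub_mul, Matrix.one_mul, Matrix.mul_one,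
    Matrix.mul_assoc, hY, Matrix.mul_zero,
    Matrix.nonsing_inv_mul_cancel_left _ _ hM, sub_zero]
  simp only [← Matrix.mul_assoc, Matrix.mul_assoc (Zᴴ * (M⁻¹ * Z))⁻¹]
  simp only [Matrix.mul_assoc, key]
  simp
end
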